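/- As p tends to infinity over odd primes, F(p) converges to 47/64 + (1/64)·Σ_{k=1}^∞ 2^{−(k+2^k)}, where F(p) := 47/64 + (1/128)·1/(2^{o(p)}−1) + (1/64)·(2^p/(2^p−1))·(2^{o(p)}/(2^{o(p)}−1))·Σ_{x∈L(p)} 2^{−(x+r(p,x))}. -/

import Mathlib

/-- `ℤ[1/2]`: the subring of `ℚ` of rationals whose denominator is a power of `2`. -/
def Zhalf : Subring ℚ where
  carrier := {q : ℚ | ∃ (m : ℤ) (n : ℕ), q = (m : ℚ) / 2 ^ n}
  zero_mem' := ⟨0, 0, by norm_num⟩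
  one_mem' := ⟨1, 0, by norm_num⟩
  add_mem' := by
    rintro a b ⟨m, n, rfl⟩ ⟨m', n', rfl⟩
    exact ⟨m * 2 ^ n' + m' * 2 ^ n, n + n', by push_cast [pow_add]; field_simp⟩
  mul_mem' := by
    rintro a b ⟨m, n, rfl⟩ ⟨m', n', rfl⟩
    exact ⟨m * m', n + n', by push_cast [pow_add]; field_simp⟩
  neg_mem' := by
    rintro a ⟨m, n, rfl⟩
    exact ⟨-m, n, by push_cast; ring⟩

/-- `o(p)`: the multiplicative order of `2` modulo `p`. -/
noncomputable def oOrd (p : ℕ) : ℕ := orderOf (2 : ZMod p)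

/-- `L(p)`: the set of `x` with `2 ≤ x ≤ p+1` congruent mod `p` to a power of `2`. -/
noncomputable def Lset (p : ℕ) : Finset ℕ :=
  letI : DecidablePred fun x : ℕ => ∃ i : ℕ, (2 : ZMod p) ^ i = (x : ZMod p) :=
    fun _ => Classical.propDecidable _
  (Finset.Icc 2 (p + 1)).filter fun x => ∃ i : ℕ, (2 : ZMod p) ^ i = (x : ZMod p)

/-- `r(p,x)`: the least natural number `r` with `2^r ≡ x (mod p)`. -/
noncomputable def rpx (p x : ℕ) : ℕ := sInf {r : ℕ | (2 : ZMod p) ^ r = (x : ZMod p)}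

lemma zmod_pow_eq_iff (p r x : ℕ) : (2 : ZMod p) ^ r = (x : ZMod p) ↔ 2 ^ r ≡ x [MOD p] := by
  rw [show (2 : ZMod p) = ((2 : ℕ) : ZMod p) by push_cast; ring, ← Nat.cast_pow,
    ZMod.natCast_eq_natCast_iff]

lemma mem_Lset_iff {p x : ℕ} : x ∈ Lset p ↔ (2 ≤ x ∧ x ≤ p + 1) ∧ ∃ i : ℕ, 2 ^ i ≡ x [MOD p] := by
  simp only [Lset, Finset.mem_filter, Finset.mem_Icc, zmod_pow_eq_iff]

lemma rpx_spec {p x : ℕ} (hx : x ∈ Lset p) : 2 ^ rpx p x ≡ x [MOD p] := by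
  obtain ⟨-, i, hi⟩ := mem_Lset_iff.mp hx
  have : rpx p x ∈ {r : ℕ | (2 : ZMod p) ^ r = (x : ZMod p)} :=
    Nat.sInf_mem ⟨i, (zmod_pow_eq_iff p i x).mpr hi⟩
  exact (zmod_pow_eq_iff p _ x).mp this

lemma rpx_min {p x r : ℕ} (h : 2 ^ r ≡ x [MOD p]) : rpx p x ≤ r :=
  Nat.sInf_le ((zmod_pow_eq_iff p r x).mpr h)

lemma two_pow_ord_ge {p : ℕ} (hp : p.Prime) (hp2 : p ≠ 2) : p + 1 ≤ 2 ^ oOrd p := by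
  haveI : Fact p.Prime := ⟨hp⟩
  have h2 : (2 : ZMod p) ≠ 0 := by
    have : ¬ (p ∣ 2) := fun hd => hp2 ((Nat.prime_dvd_prime_iff_eq hp Nat.prime_two).mp hd)
    rw [show (2 : ZMod p) = ((2:ℕ) : ZMod p) by push_cast; ring,
      Ne, ZMod.natCast_eq_zero_iff]
    exact this
  have hfin : IsOfFinOrder (2 : ZMod p) := by
    refine isOfFinOrder_iff_pow_eq_one.mpr ⟨p - 1, ?_, ZMod.pow_card_sub_one_eq_one h2⟩
    have := hp.one_lt; omega
  have hpos : 0 < oOrd p := (orderOf_pos_iff).mpr hfin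
  have hone : (2 : ZMod p) ^ oOrd p = 1 := pow_orderOf_eq_one _
  have hmod : 2 ^ oOrd p ≡ 1 [MOD p] := by
    rw [← zmod_pow_eq_iff] ; simpa using hone
  have hdvd : p ∣ 2 ^ oOrd p - 1 := (Nat.modEq_iff_dvd' (Nat.one_le_two_pow)).mp hmod.symm
  have hlt : 1 < 2 ^ oOrd p := by
    calc 1 < 2 ^ 1 := by norm_num
    _ ≤ 2 ^ oOrd p := Nat.pow_le_pow_right (by norm_num) hpos
  have := Nat.le_of_dvd (by omega) hdvd
  omega

/-- For `1 ≤ k` with `2^k ≤ p`, `2^k ∈ Lset p`. -/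
lemma pow_mem_Lset {p k : ℕ} (hk : 1 ≤ k) (hkp : 2 ^ k ≤ p) : 2 ^ k ∈ Lset p := by
  refine mem_Lset_iff.mpr ⟨⟨?_, by omega⟩, k, Nat.ModEq.refl _⟩
  calc 2 = 2 ^ 1 := by norm_num
  _ ≤ 2 ^ k := Nat.pow_le_pow_right (by norm_num) hk

/-- Minimality: `rpx p (2^k) = k` when `2^k ≤ p`, `p` odd prime, `k ≥ 1`. -/
lemma rpx_pow_eq {p k : ℕ} (hp : p.Prime) (hp2 : p ≠ 2) (hk : 1 ≤ k) (hkp : 2 ^ k ≤ p) :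
    rpx p (2 ^ k) = k := by
  have hle : rpx p (2 ^ k) ≤ k := rpx_min (Nat.ModEq.refl _)
  set r := rpx p (2 ^ k) with hr
  rcases Nat.lt_or_ge r k with hlt | hge
  · exfalso
    have hmod : 2 ^ r ≡ 2 ^ k [MOD p] := rpx_spec (pow_mem_Lset hk hkp)
    have hdvd : p ∣ 2 ^ k - 2 ^ r :=
      (Nat.modEq_iff_dvd' (Nat.pow_le_pow_right (by norm_num) hlt.le)).mp hmod
    have hfact : 2 ^ k - 2 ^ r = 2 ^ r * (2 ^ (k - r) - 1) := by
      rw [Nat.mul_sub, mul_one, ← pow_add, Nat.add_sub_cancel' hlt.le]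
    rw [hfact] at hdvd
    have hodd : ¬ p ∣ 2 ^ r := by
      intro hd
      exact hp2 ((Nat.prime_dvd_prime_iff_eq hp Nat.prime_two).mp (hp.dvd_of_dvd_pow hd))
    have hd2 : p ∣ 2 ^ (k - r) - 1 := (hp.dvd_mul.mp hdvd).resolve_left hodd
    have h1 : 1 ≤ 2 ^ (k - r) - 1 := by
      have : 2 ^ 1 ≤ 2 ^ (k - r) := Nat.pow_le_pow_right (by norm_num) (by omega)
      omega
    have h2 : 2 ^ (k - r) ≤ 2 ^ k := Nat.pow_le_pow_right (by norm_num) (by omega)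
    have := Nat.le_of_dvd (by omega) hd2
    omega
  · omega

lemma good_filter_eq {p : ℕ} (hp : p.Prime) (hp2 : p ≠ 2) :
    (Lset p).filter (fun x => x = 2 ^ (rpx p x)) =
      (Finset.Icc 1 (Nat.log 2 p)).image (fun k => 2 ^ k) := by
  ext x
  simp only [Finset.mem_filter, Finset.mem_image, Finset.mem_Icc]
  constructor
  · rintro ⟨hx, hxr⟩
    set r := rpx p x with hr
    refine ⟨r, ⟨?_, ?_⟩, hxr.symm⟩
    · rcases Nat.eq_zero_or_pos r with h0 | h1
      · exfalso; rw [h0, pow_zero] at hxr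
        have := (mem_Lset_iff.mp hx).1.1; omega
      · exact h1
    · have hxle : x ≤ p + 1 := (mem_Lset_iff.mp hx).1.2
      have hxp : x ≤ p := by
        by_contra h
        have hx1 : x = p + 1 := by omega
        have h0 : 2 ^ 0 ≡ x [MOD p] := by
          rw [pow_zero, hx1, Nat.ModEq]; simp [Nat.add_mod]
        have : r ≤ 0 := rpx_min h0
        rw [Nat.le_zero.mp this, pow_zero] at hxr
        have := (mem_Lset_iff.mp hx).1.1; omega
      rw [Nat.le_log_iff_pow_le (by norm_num) hp.pos.ne', ← hxr]
      exact hxp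
  · rintro ⟨k, ⟨hk1, hk2⟩, rfl⟩
    have hkp : 2 ^ k ≤ p :=
      (Nat.le_log_iff_pow_le (by norm_num) hp.pos.ne').mp hk2
    exact ⟨pow_mem_Lset hk1 hkp, by rw [rpx_pow_eq hp hp2 hk1 hkp]⟩

lemma bad_bound {p x : ℕ} (hp : p.Prime) (hx : x ∈ Lset p) (hne : x ≠ 2 ^ (rpx p x)) :
    p ≤ 2 ^ (rpx p x) ∨ x = p + 1 := by
  set r := rpx p x with hr
  have hmod : 2 ^ r ≡ x [MOD p] := rpx_spec hx
  rcases lt_trichotomy (2 ^ r) x with h | h | h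
  · right
    have hdvd : p ∣ x - 2 ^ r := (Nat.modEq_iff_dvd' h.le).mp hmod
    have := Nat.le_of_dvd (by omega) hdvd
    have hxle : x ≤ p + 1 := (mem_Lset_iff.mp hx).1.2
    have h1 : 1 ≤ 2 ^ r := Nat.one_le_two_pow
    omega
  · exact absurd h.symm hne
  · left
    have hdvd : p ∣ 2 ^ r - x := (Nat.modEq_iff_dvd' h.le).mp hmod.symm
    have := Nat.le_of_dvd (by omega) hdvd
    omega

noncomputable def Sval : ℝ := ∑' k : ℕ, (1 : ℝ) / 2 ^ ((k + 1) + 2 ^ (k + 1))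

lemma summable_S : Summable (fun k : ℕ => (1 : ℝ) / 2 ^ ((k + 1) + 2 ^ (k + 1))) := by
  refine Summable.of_nonneg_of_le (fun k => by positivity) (fun k => ?_)
    summable_geometric_two
  rw [← one_div_pow]
  refine pow_le_pow_of_le_one (by norm_num) (by norm_num) ?_
  have := Nat.lt_two_pow_self (n := k+1)
  omega

lemma T_close {p : ℕ} (hp : p.Prime) (hp2 : p ≠ 2) :
    |∑ x ∈ Lset p, (1 : ℝ) / 2 ^ (x + rpx p x) - Sval| ≤ 5 / p := by
  classical
  set K := Nat.log 2 p with hK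
  set T := ∑ x ∈ Lset p, (1 : ℝ) / 2 ^ (x + rpx p x) with hT
  set good := ∑ x ∈ (Lset p).filter (fun x => x = 2 ^ (rpx p x)), (1 : ℝ) / 2 ^ (x + rpx p x)
    with hgood
  set bad := ∑ x ∈ (Lset p).filter (fun x => ¬ x = 2 ^ (rpx p x)), (1 : ℝ) / 2 ^ (x + rpx p x)
    with hbad
  have hsplit : T = good + bad := (Finset.sum_filter_add_sum_filter_not _ _ _).symm
  -- good sum equals partial sum of the series
  have hinj : Set.InjOn (fun k : ℕ => 2 ^ k) ((Finset.Icc 1 K) : Set ℕ) := by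
    intro a _ b _ h
    exact Nat.pow_right_injective (le_refl 2) h
  have hgood_eq : good = ∑ k ∈ Finset.Icc 1 K, (1 : ℝ) / 2 ^ (2 ^ k + k) := by
    rw [hgood, good_filter_eq hp hp2, Finset.sum_image hinj]
    refine Finset.sum_congr rfl fun k hk => ?_
    obtain ⟨hk1, hk2⟩ := Finset.mem_Icc.mp hk
    rw [rpx_pow_eq hp hp2 hk1 ((Nat.le_log_iff_pow_le (by norm_num) hp.pos.ne').mp hk2)]
  have hpartial : ∑ k ∈ Finset.Icc 1 K, (1 : ℝ) / 2 ^ (2 ^ k + k) =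
      ∑ i ∈ Finset.range K, (1 : ℝ) / 2 ^ ((i + 1) + 2 ^ (i + 1)) := by
    rw [← Finset.Ico_add_one_right_eq_Icc, Finset.sum_Ico_eq_sum_range]
    refine Finset.sum_congr (by congr 1) fun i _ => ?_
    have h1 : 1 + i = i + 1 := by omega
    rw [h1, Nat.add_comm]
  -- tail bound
  have hplt : (p : ℝ) + 1 ≤ 2 ^ (K + 1) := by
    have := Nat.lt_pow_succ_log_self (show 1 < 2 by norm_num) p
    exact_mod_cast Nat.succ_le_of_lt this
  have hppos : (0 : ℝ) < p := by exact_mod_cast hp.pos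
  have hSeq : Sval = ∑ i ∈ Finset.range K, (1 : ℝ) / 2 ^ ((i + 1) + 2 ^ (i + 1)) +
      ∑' i : ℕ, (1 : ℝ) / 2 ^ ((i + K + 1) + 2 ^ (i + K + 1)) :=
    (Summable.sum_add_tsum_nat_add K summable_S).symm
  have htail_le : ∑' i : ℕ, (1 : ℝ) / 2 ^ ((i + K + 1) + 2 ^ (i + K + 1)) ≤ 2 / p := by
    have h1 : ∀ i : ℕ, (1 : ℝ) / 2 ^ ((i + K + 1) + 2 ^ (i + K + 1)) ≤
        (1 / 2) ^ (K + 1) * (1 / 2) ^ i := by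
      intro i
      rw [← pow_add, ← one_div_pow]
      refine pow_le_pow_of_le_one (by norm_num) (by norm_num) ?_
      have := Nat.one_le_two_pow (n := i + K + 1)
      omega
    have h2 : ∑' i : ℕ, ((1 / 2 : ℝ) ^ (K + 1) * (1 / 2) ^ i) = (1 / 2) ^ (K + 1) * 2 := by
      rw [tsum_mul_left, tsum_geometric_two]
    calc ∑' i : ℕ, (1 : ℝ) / 2 ^ ((i + K + 1) + 2 ^ (i + K + 1))
        ≤ ∑' i : ℕ, ((1 / 2 : ℝ) ^ (K + 1) * (1 / 2) ^ i) := by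
          refine Summable.tsum_le_tsum h1 ?_ (Summable.mul_left _ summable_geometric_two)
          exact (summable_S.comp_injective (add_left_injective K)).congr (fun i => rfl)
      _ = (1 / 2) ^ (K + 1) * 2 := h2
      _ ≤ 2 / p := by
          rw [div_pow, one_pow, div_mul_eq_mul_div, div_le_div_iff₀ (by positivity) hppos]
          nlinarith [hplt]
  have htail_nonneg : 0 ≤ ∑' i : ℕ, (1 : ℝ) / 2 ^ ((i + K + 1) + 2 ^ (i + K + 1)) :=
    tsum_nonneg (fun i => by positivity)
  -- bad sum bound
  have hbad_nonneg : 0 ≤ bad := Finset.sum_nonneg (fun x _ => by positivity)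
  have hbad_le : bad ≤ 3 / p := by
    have hstep : bad ≤ ∑ x ∈ (Lset p).filter (fun x => ¬ x = 2 ^ (rpx p x)),
        ((1 / p) * (1 / 2 : ℝ) ^ x + if x = p + 1 then (1 / 2 : ℝ) ^ (p + 1) else 0) := by
      refine Finset.sum_le_sum fun x hx => ?_
      obtain ⟨hxL, hxne⟩ := Finset.mem_filter.mp hx
      rw [← one_div_pow]
      by_cases hc : x = p + 1
      · subst hc
        rw [if_pos rfl]
        have h1 : ((1:ℝ) / 2) ^ ((p + 1) + rpx p (p + 1)) ≤ (1 / 2) ^ (p + 1) :=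
          pow_le_pow_of_le_one (by norm_num) (by norm_num) (by omega)
        have h2 : (0:ℝ) ≤ (1 / p) * (1 / 2 : ℝ) ^ (p + 1) := by positivity
        linarith
      · have hple : p ≤ 2 ^ (rpx p x) := (bad_bound hp hxL hxne).resolve_right hc
        rw [if_neg hc, add_zero, pow_add]
        have h2r : ((1:ℝ)/2) ^ (rpx p x) ≤ 1 / p := by
          rw [one_div_pow]
          exact one_div_le_one_div_of_le hppos (by exact_mod_cast hple)
        have hx_nonneg : (0:ℝ) ≤ (1/2:ℝ)^x := by positivity
        calc ((1:ℝ)/2) ^ x * (1/2) ^ (rpx p x) ≤ (1/2:ℝ)^x * (1/p) :=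
              mul_le_mul_of_nonneg_left h2r hx_nonneg
          _ = (1/p) * (1/2:ℝ)^x := by ring
    have hsum1 : ∑ x ∈ (Lset p).filter (fun x => ¬ x = 2 ^ (rpx p x)), (1 / 2 : ℝ) ^ x ≤ 2 := by
      have := Summable.sum_le_tsum ((Lset p).filter (fun x => ¬ x = 2 ^ (rpx p x)))
        (f := fun x : ℕ => (1/2:ℝ)^x) (fun x _ => by positivity) summable_geometric_two
      rw [tsum_geometric_two] at this
      exact this
    have hsum2 : ∑ x ∈ (Lset p).filter (fun x => ¬ x = 2 ^ (rpx p x)),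
        (if x = p + 1 then (1 / 2 : ℝ) ^ (p + 1) else 0) ≤ (1/2:ℝ) ^ (p+1) := by
      rw [Finset.sum_ite_eq' _ (p+1) (fun _ => (1/2:ℝ)^(p+1))]
      split
      · exact le_refl _
      · positivity
    have hlast : (1/2:ℝ) ^ (p+1) ≤ 1 / p := by
      rw [one_div_pow]
      refine one_div_le_one_div_of_le hppos ?_
      exact_mod_cast (Nat.lt_two_pow_self (n := p)).le.trans (Nat.pow_le_pow_right (by norm_num) (by omega))
    calc bad ≤ _ := hstep
      _ = (1/p) * ∑ x ∈ (Lset p).filter (fun x => ¬ x = 2 ^ (rpx p x)), (1 / 2 : ℝ) ^ x +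
          ∑ x ∈ (Lset p).filter (fun x => ¬ x = 2 ^ (rpx p x)),
            (if x = p + 1 then (1 / 2 : ℝ) ^ (p + 1) else 0) := by
          rw [Finset.sum_add_distrib, Finset.mul_sum]
      _ ≤ (1/p) * 2 + 1/p := by
          have h0 : (0:ℝ) ≤ 1/p := by positivity
          have := mul_le_mul_of_nonneg_left hsum1 h0
          linarith [hsum2.trans hlast]
      _ ≤ 3 / p := le_of_eq (by ring)
  -- final assembly
  have h25 : (2:ℝ) / p ≤ 5 / p := by gcongr <;> norm_num
  have h35 : (3:ℝ) / p ≤ 5 / p := by gcongr <;> norm_num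
  rw [abs_le]
  have hge : good = ∑ i ∈ Finset.range K, (1 : ℝ) / 2 ^ ((i + 1) + 2 ^ (i + 1)) := by
    rw [hgood_eq, hpartial]
  constructor
  · rw [hsplit, hge]
    linarith [hSeq, htail_le, hbad_nonneg, h25]
  · rw [hsplit, hge]
    linarith [hSeq, htail_nonneg, hbad_le, h35]

/-- The value `F(p)` from the paper. -/
noncomputable def Fval (p : ℕ) : ℝ :=
  47 / 64 + (1 / 128) * (1 / (2 ^ oOrd p - 1)) +
    (1 / 64) * (2 ^ p / (2 ^ p - 1)) * ((2 : ℝ) ^ oOrd p / (2 ^ oOrd p - 1)) *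
      ∑ x ∈ Lset p, (1 : ℝ) / 2 ^ (x + rpx p x)

/-- As `p` tends to infinity over odd primes, `F(p)` converges to
`47/64 + (1/64)·Σ_{k=1}^∞ 2^{−(k+2^k)}`. -/
theorem statement5 :
    Filter.Tendsto Fval (Filter.atTop ⊓ Filter.principal {p : ℕ | p.Prime ∧ p ≠ 2})
      (nhds (47 / 64 + (1 / 64) * ∑' k : ℕ, (1 : ℝ) / 2 ^ ((k + 1) + 2 ^ (k + 1)))) := by
  set L := Filter.atTop ⊓ Filter.principal {p : ℕ | p.Prime ∧ p ≠ 2} with hLdef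
  have hEv : ∀ᶠ p in L, p.Prime ∧ p ≠ 2 := by
    rw [hLdef, Filter.eventually_inf_principal]
    exact Filter.Eventually.of_forall fun p h => h
  have hinv : Filter.Tendsto (fun p : ℕ => 1 / (p : ℝ)) L (nhds 0) :=
    tendsto_one_div_atTop_nhds_zero_nat.mono_left inf_le_left
  -- 1/(2^o(p) - 1) → 0
  have h1 : Filter.Tendsto (fun p : ℕ => 1 / ((2 : ℝ) ^ oOrd p - 1)) L (nhds 0) := by
    refine squeeze_zero_norm' ?_ hinv
    filter_upwards [hEv] with p hp
    have hge : (p : ℝ) + 1 ≤ 2 ^ oOrd p := by exact_mod_cast two_pow_ord_ge hp.1 hp.2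
    have hppos : (0 : ℝ) < p := by exact_mod_cast hp.1.pos
    rw [Real.norm_eq_abs, abs_of_nonneg (one_div_nonneg.mpr (by linarith))]
    exact one_div_le_one_div_of_le hppos (by linarith)
  -- 1/(2^p - 1) → 0
  have h2 : Filter.Tendsto (fun p : ℕ => 1 / ((2 : ℝ) ^ p - 1)) L (nhds 0) := by
    refine squeeze_zero_norm' ?_ hinv
    filter_upwards [hEv] with p hp
    have hge : (p : ℝ) + 1 ≤ 2 ^ p := by exact_mod_cast Nat.succ_le_of_lt (Nat.lt_two_pow_self (n := p))
    have hppos : (0 : ℝ) < p := by exact_mod_cast hp.1.pos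
    rw [Real.norm_eq_abs, abs_of_nonneg (one_div_nonneg.mpr (by linarith))]
    exact one_div_le_one_div_of_le hppos (by linarith)
  -- A(p) → 1
  have hA : Filter.Tendsto (fun p : ℕ => (2 : ℝ) ^ p / (2 ^ p - 1)) L (nhds 1) := by
    have h : Filter.Tendsto (fun p : ℕ => 1 + 1 / ((2 : ℝ) ^ p - 1)) L (nhds (1 + 0)) :=
      tendsto_const_nhds.add h2
    rw [add_zero] at h
    refine h.congr' ?_
    filter_upwards [hEv] with p hp
    have hge : (p : ℝ) + 1 ≤ 2 ^ p := by exact_mod_cast Nat.succ_le_of_lt (Nat.lt_two_pow_self (n := p))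
    have hppos : (0 : ℝ) < p := by exact_mod_cast hp.1.pos
    have hne : (2 : ℝ) ^ p - 1 ≠ 0 := ne_of_gt (by linarith)
    field_simp
    ring
  -- B(p) → 1
  have hB : Filter.Tendsto (fun p : ℕ => (2 : ℝ) ^ oOrd p / (2 ^ oOrd p - 1)) L (nhds 1) := by
    have h : Filter.Tendsto (fun p : ℕ => 1 + 1 / ((2 : ℝ) ^ oOrd p - 1)) L (nhds (1 + 0)) :=
      tendsto_const_nhds.add h1
    rw [add_zero] at h
    refine h.congr' ?_
    filter_upwards [hEv] with p hp
    have hge : (p : ℝ) + 1 ≤ 2 ^ oOrd p := by exact_mod_cast two_pow_ord_ge hp.1 hp.2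
    have hppos : (0 : ℝ) < p := by exact_mod_cast hp.1.pos
    have hne : (2 : ℝ) ^ oOrd p - 1 ≠ 0 := ne_of_gt (by linarith)
    field_simp
    ring
  -- T(p) → Sval
  have hT : Filter.Tendsto (fun p : ℕ => ∑ x ∈ Lset p, (1 : ℝ) / 2 ^ (x + rpx p x)) L
      (nhds Sval) := by
    have hdiff : Filter.Tendsto
        (fun p : ℕ => (∑ x ∈ Lset p, (1 : ℝ) / 2 ^ (x + rpx p x)) - Sval) L (nhds 0) := by
      refine squeeze_zero_norm' ?_ (by simpa using hinv.const_mul 5)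
      filter_upwards [hEv] with p hp
      rw [Real.norm_eq_abs, ← div_eq_mul_inv]
      exact T_close hp.1 hp.2
    have := hdiff.add_const Sval
    rw [zero_add] at this
    simpa using this
  have hprod : Filter.Tendsto
      (fun p : ℕ => (1 / 64) * ((2 : ℝ) ^ p / (2 ^ p - 1)) *
        ((2 : ℝ) ^ oOrd p / (2 ^ oOrd p - 1)) *
        ∑ x ∈ Lset p, (1 : ℝ) / 2 ^ (x + rpx p x)) L (nhds ((1 / 64) * 1 * 1 * Sval)) :=
    (((hA.const_mul (1 / 64)).mul hB).mul hT)
  have htot : Filter.Tendsto Fval L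
      (nhds (47 / 64 + (1 / 128) * 0 + (1 / 64) * 1 * 1 * Sval)) :=
    (tendsto_const_nhds.add (h1.const_mul (1 / 128))).add hprod
  have hpt : (47 / 64 + (1 / 128) * 0 + (1 / 64) * 1 * 1 * Sval : ℝ)
      = 47 / 64 + (1 / 64) * Sval := by ring
  rw [hpt] at htot
  exact htot
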